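/- For all natural numbers k₁ and k₂, the following identity of rational numbers holds: ∑_{j=0}^{k₂} (−1)^{k₂ − j} · C(k₂, j) / (k₁ + k₂ + 1 − j) = 1 / ((k₂ + 1) · C(k₁ + k₂ + 1, k₂ + 1)). -/
import Mathlib

lemma aux_stmt16 (k₂ : ℕ) : ∀ k₁ : ℕ,
    ∑ j ∈ Finset.range (k₂ + 1),
        (-1 : ℚ) ^ (k₂ - j) * (Nat.choose k₂ j : ℚ) / ((k₁ : ℚ) + (k₂ : ℚ) + 1 - (j : ℚ))
      = ((Nat.factorial k₁ : ℚ) * (Nat.factorial k₂ : ℚ)) / (Nat.factorial (k₁ + k₂ + 1) : ℚ) := by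
  induction k₂ with
  | zero =>
    intro k₁
    have h : ((k₁:ℚ) + 1) ≠ 0 := by positivity
    simp [Nat.factorial_succ]
    field_simp
  | succ n ih =>
    intro k₁
    have hfac : ∀ m : ℕ, ((Nat.factorial m : ℚ)) ≠ 0 := by
      intro m; exact_mod_cast (Nat.factorial_pos m).ne'
    rw [Finset.sum_range_succ']
    have hsplit : ∀ j ∈ Finset.range (n + 1),
        (-1 : ℚ) ^ (n + 1 - (j + 1)) * (Nat.choose (n+1) (j+1) : ℚ)
            / ((k₁ : ℚ) + ((n+1 : ℕ) : ℚ) + 1 - ((j+1 : ℕ) : ℚ))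
        = (-1 : ℚ) ^ (n - j) * (Nat.choose n j : ℚ) / ((k₁ : ℚ) + (n : ℚ) + 1 - (j : ℚ))
          + (-1 : ℚ) ^ (n - j) * (Nat.choose n (j+1) : ℚ) / ((k₁ : ℚ) + (n : ℚ) + 1 - (j : ℚ)) := by
      intro j hj
      rw [Nat.succ_sub_succ, Nat.choose_succ_succ]
      push_cast
      ring
    rw [Finset.sum_congr rfl hsplit, Finset.sum_add_distrib, ih k₁]
    -- Handle the B-sum plus the j = 0 term
    have hB : (∑ j ∈ Finset.range (n + 1),
          (-1 : ℚ) ^ (n - j) * (Nat.choose n (j+1) : ℚ) / ((k₁ : ℚ) + (n : ℚ) + 1 - (j : ℚ)))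
        + (-1 : ℚ) ^ (n + 1 - 0) * (Nat.choose (n+1) 0 : ℚ)
            / ((k₁ : ℚ) + ((n+1 : ℕ) : ℚ) + 1 - ((0 : ℕ) : ℚ))
        = - (((Nat.factorial (k₁+1) : ℚ) * (Nat.factorial n : ℚ))
              / (Nat.factorial ((k₁+1) + n + 1) : ℚ)) := by
      rw [← ih (k₁ + 1)]
      have hshift : (∑ i ∈ Finset.range (n + 2),
            (-1 : ℚ) ^ (n + 1 - i) * (Nat.choose n i : ℚ) / ((k₁ : ℚ) + (n : ℚ) + 2 - (i : ℚ)))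
          = (∑ j ∈ Finset.range (n + 1),
            (-1 : ℚ) ^ (n - j) * (Nat.choose n (j+1) : ℚ) / ((k₁ : ℚ) + (n : ℚ) + 1 - (j : ℚ)))
          + (-1 : ℚ) ^ (n + 1 - 0) * (Nat.choose (n+1) 0 : ℚ)
              / ((k₁ : ℚ) + ((n+1 : ℕ) : ℚ) + 1 - ((0 : ℕ) : ℚ)) := by
        rw [Finset.sum_range_succ']
        congr 1
        · apply Finset.sum_congr rfl
          intro j hj
          rw [Nat.succ_sub_succ]
          push_cast
          ring
        · simp only [Nat.choose_zero_right]
          push_cast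
          ring
      rw [← hshift, Finset.sum_range_succ, Nat.choose_succ_self]
      simp only [Nat.cast_zero, mul_zero, zero_mul, zero_div, add_zero]
      rw [← Finset.sum_neg_distrib]
      apply Finset.sum_congr rfl
      intro i hi
      have hi' : i ≤ n := by
        have := Finset.mem_range.mp hi; omega
      rw [show n + 1 - i = (n - i) + 1 from by omega]
      push_cast
      ring
    rw [add_assoc, hB]
    -- Final factorial arithmetic
    have e1 : (k₁ + 1) + n + 1 = k₁ + n + 2 := by ring
    have e2 : k₁ + (n + 1) + 1 = k₁ + n + 2 := by ring
    rw [e1, e2]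
    have f1 : (Nat.factorial (k₁ + n + 2) : ℚ) = ((k₁:ℚ) + n + 2) * (Nat.factorial (k₁ + n + 1) : ℚ) := by
      have : k₁ + n + 2 = (k₁ + n + 1) + 1 := by ring
      rw [this, Nat.factorial_succ]; push_cast; ring
    have f2 : (Nat.factorial (n + 1) : ℚ) = ((n:ℚ) + 1) * (Nat.factorial n : ℚ) := by
      rw [Nat.factorial_succ]; push_cast; ring
    have f3 : (Nat.factorial (k₁ + 1) : ℚ) = ((k₁:ℚ) + 1) * (Nat.factorial k₁ : ℚ) := by
      rw [Nat.factorial_succ]; push_cast; ring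
    rw [f1, f2, f3]
    have h1 : ((k₁:ℚ) + n + 2) ≠ 0 := by positivity
    field_simp
    ring

/-- For all natural numbers `k₁` and `k₂`,
`∑_{j=0}^{k₂} (−1)^{k₂ − j} · C(k₂, j) / (k₁ + k₂ + 1 − j)
  = 1 / ((k₂ + 1) · C(k₁ + k₂ + 1, k₂ + 1))` as rational numbers. -/
theorem stmt_16 (k₁ k₂ : ℕ) :
    ∑ j ∈ Finset.range (k₂ + 1),
        (-1 : ℚ) ^ (k₂ - j) * (Nat.choose k₂ j : ℚ) / ((k₁ : ℚ) + (k₂ : ℚ) + 1 - (j : ℚ))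
      = 1 / (((k₂ : ℚ) + 1) * (Nat.choose (k₁ + k₂ + 1) (k₂ + 1) : ℚ)) := by
  rw [aux_stmt16 k₂ k₁]
  have hle : k₂ + 1 ≤ k₁ + k₂ + 1 := by omega
  have key := Nat.choose_mul_factorial_mul_factorial hle
  have hsub : k₁ + k₂ + 1 - (k₂ + 1) = k₁ := by omega
  rw [hsub] at key
  have keyQ : ((k₁ + k₂ + 1).choose (k₂ + 1) : ℚ) * (Nat.factorial (k₂+1) : ℚ) * (Nat.factorial k₁ : ℚ)
      = (Nat.factorial (k₁ + k₂ + 1) : ℚ) := by exact_mod_cast key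
  have f2 : (Nat.factorial (k₂ + 1) : ℚ) = ((k₂:ℚ) + 1) * (Nat.factorial k₂ : ℚ) := by
    rw [Nat.factorial_succ]; push_cast; ring
  have h1 : (Nat.factorial k₁ : ℚ) ≠ 0 := by exact_mod_cast (Nat.factorial_pos k₁).ne'
  have h2 : (Nat.factorial k₂ : ℚ) ≠ 0 := by exact_mod_cast (Nat.factorial_pos k₂).ne'
  have h3 : (Nat.factorial (k₁ + k₂ + 1) : ℚ) ≠ 0 := by exact_mod_cast (Nat.factorial_pos _).ne'
  have h4 : ((k₂:ℚ) + 1) ≠ 0 := by positivity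
  have h5 : ((k₁ + k₂ + 1).choose (k₂ + 1) : ℚ) ≠ 0 := by
    exact_mod_cast (Nat.choose_pos hle).ne'
  rw [f2] at keyQ
  field_simp
  nlinarith [keyQ]
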